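/- Let G be a simple 2-connected graph satisfying: (i) no vertex of degree 2 in G is adjacent to a vertex of degree at most 5; (ii) every vertex u of degree at least 6 that is adjacent to some 2-vertex satisfies n_2(u) + n_3(u) ≤ d(u) − 3; (iii) no vertex u of degree at least 6 adjacent to some 2-vertex satisfies both n_2(u) + n_3(u) = d(u) − 3 and n_3(u) ≤ 3; (iv) G contains no vertex z of degree at least 6 adjacent to some 2-vertex such that n_2(z) = d(z) − 4 (so z has exactly four neighbors of degree at least 3) and among these four neighbors there are two adjacent vertices a and b with n_2(b) ∈ {d(b) − 4, d(b) − 5}; (v) G contains no triangle whose three vertices all have degree 4 in G. Let uvw be a triangle of H with min{d_H(u), d_H(v), d_H(w)} = 4. Then: (1) if d_H(v) = 4 and d(v) > 4, then d_H(u) ≥ 6 and d_H(w) ≥ 6; (2) if d_H(v) = 4 and 4 ≤ d_H(u) ≤ 5, then d(v) = 4; (3) at least one of u, v, w has H-degree at least 5. -/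

import Mathlib

variable {V : Type*} [Fintype V] [DecidableEq V]

/-- `G` is 2-connected: it is connected, has at least 3 vertices, and deleting any
single vertex leaves it connected. -/
def TwoConnected (G : SimpleGraph V) : Prop :=
  G.Connected ∧ 3 ≤ Fintype.card V ∧
    ∀ v : V, (G.induce {w : V | w ≠ v}).Connected

/-- `nk G u m` is the number of neighbors of `u` in `G` having degree exactly `m`. -/
def nk (G : SimpleGraph V) [DecidableRel G.Adj] (u : V) (m : ℕ) : ℕ :=
  ((G.neighborFinset u).filter fun w => G.degree w = m).card

/-- `delTwo G` is the graph `H` obtained from `G` by deleting all 2-vertices: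
it keeps exactly the edges of `G` joining two vertices of degree at least 3
(deleted vertices become isolated). -/
def delTwo (G : SimpleGraph V) [DecidableRel G.Adj] : SimpleGraph V where
  Adj x y := G.Adj x y ∧ 3 ≤ G.degree x ∧ 3 ≤ G.degree y
  symm := ⟨fun x y h => ⟨h.1.symm, h.2.2, h.2.1⟩⟩
  loopless := ⟨fun x h => G.loopless.irrefl x h.1⟩

instance (G : SimpleGraph V) [DecidableRel G.Adj] : DecidableRel (delTwo G).Adj :=
  fun x y => inferInstanceAs (Decidable (G.Adj x y ∧ 3 ≤ G.degree x ∧ 3 ≤ G.degree y))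


private lemma exists_adj_of_reachable' {W : Type*} {G : SimpleGraph W} {a b : W}
    (hne : a ≠ b) (r : G.Reachable a b) : ∃ c, G.Adj a c := by
  obtain ⟨p⟩ := r
  cases p with
  | nil => exact absurd rfl hne
  | cons h _ => exact ⟨_, h⟩

private lemma two_le_degree_of_twoConnected' (G : SimpleGraph V) [DecidableRel G.Adj]
    (h2c : TwoConnected G) (t : V) : 2 ≤ G.degree t := by
  obtain ⟨hconn, hcard, hdel⟩ := h2c
  obtain ⟨x, hx⟩ := Fintype.exists_ne_of_one_lt_card (by omega) t
  obtain ⟨s, hs⟩ := exists_adj_of_reachable' (Ne.symm hx) (hconn.preconnected t x)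
  have hts : t ≠ s := hs.ne
  obtain ⟨x', hx't, hx's⟩ : ∃ x', x' ≠ t ∧ x' ≠ s := by
    by_contra hc
    push_neg at hc
    have hsub : (Finset.univ : Finset V) ⊆ {t, s} := by
      intro y _
      by_cases hyt : y = t
      · simp [hyt]
      · simp [hc y hyt]
    have := Finset.card_le_card hsub
    have h2 : ({t, s} : Finset V).card ≤ 2 := by
      apply le_trans (Finset.card_insert_le _ _)
      simp
    simp only [Finset.card_univ] at this
    omega
  have hG' := hdel s
  have ht' : t ∈ {w : V | w ≠ s} := hts
  have hx'' : x' ∈ {w : V | w ≠ s} := hx's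
  have hne2 : (⟨t, ht'⟩ : {w : V | w ≠ s}) ≠ ⟨x', hx''⟩ := by
    intro h
    exact hx't (congrArg Subtype.val h).symm
  obtain ⟨⟨y, hy⟩, hadj⟩ :=
    exists_adj_of_reachable' hne2 (hG'.preconnected ⟨t, ht'⟩ ⟨x', hx''⟩)
  have hty : G.Adj t y := hadj
  have hsy : s ≠ y := fun h => hy h.symm
  rw [← SimpleGraph.card_neighborFinset_eq_degree]
  exact Finset.one_lt_card.mpr
    ⟨s, (G.mem_neighborFinset t s).mpr hs, y, (G.mem_neighborFinset t y).mpr hty, hsy⟩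

private lemma degree_eq_delTwo_add_nk (G : SimpleGraph V) [DecidableRel G.Adj]
    (hmin : ∀ t, 2 ≤ G.degree t) {v : V} (hv : 3 ≤ G.degree v) :
    G.degree v = (delTwo G).degree v + nk G v 2 := by
  have h1 : (delTwo G).neighborFinset v =
      (G.neighborFinset v).filter (fun w => ¬ G.degree w = 2) := by
    ext w
    simp only [SimpleGraph.mem_neighborFinset, Finset.mem_filter]
    simp only [delTwo]
    constructor
    · rintro ⟨ha, -, h3⟩
      exact ⟨ha, by omega⟩
    · rintro ⟨ha, h2⟩
      exact ⟨ha, hv, by have := hmin w; omega⟩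
  have h2 := Finset.card_filter_add_card_filter_not
    (s := G.neighborFinset v) (p := fun w => G.degree w = 2)
  unfold nk
  rw [SimpleGraph.degree, SimpleGraph.degree, h1]
  omega

private lemma key_deg_four (G : SimpleGraph V) [DecidableRel G.Adj]
    (hmin : ∀ t, 2 ≤ G.degree t)
    (hi : ∀ v w : V, G.Adj v w → G.degree v = 2 → ¬ G.degree w ≤ 5)
    (hiv : ¬ ∃ z a b : V, 6 ≤ G.degree z ∧ (∃ t, G.Adj z t ∧ G.degree t = 2) ∧
      nk G z 2 = G.degree z - 4 ∧
      G.Adj z a ∧ G.Adj z b ∧ 3 ≤ G.degree a ∧ 3 ≤ G.degree b ∧ G.Adj a b ∧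
      (nk G b 2 = G.degree b - 4 ∨ nk G b 2 = G.degree b - 5))
    {u v w : V} (hvu : (delTwo G).Adj v u) (hvw : (delTwo G).Adj v w)
    (hwu : (delTwo G).Adj w u)
    (hv4 : (delTwo G).degree v = 4)
    (hu45 : (delTwo G).degree u = 4 ∨ (delTwo G).degree u = 5) :
    G.degree v = 4 := by
  obtain ⟨hadjvu, hdv, hdu⟩ := hvu
  obtain ⟨hadjvw, -, hdw⟩ := hvw
  have hdegv := degree_eq_delTwo_add_nk G hmin hdv
  have hdegu := degree_eq_delTwo_add_nk G hmin hdu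
  by_contra hne
  have hn2 : 0 < nk G v 2 := by omega
  obtain ⟨t, ht⟩ : ∃ t, G.Adj v t ∧ G.degree t = 2 := by
    obtain ⟨t, ht⟩ := Finset.card_pos.mp hn2
    rw [Finset.mem_filter, SimpleGraph.mem_neighborFinset] at ht
    exact ⟨t, ht⟩
  have hdv6 : ¬ G.degree v ≤ 5 := hi t v ht.1.symm ht.2
  exact hiv ⟨v, w, u, by omega, ⟨t, ht⟩, by omega, hadjvw, hadjvu, hdw, hdu,
    hwu.1, by omega⟩

/-- In a 2-connected graph satisfying (i)–(v): for every triangle `uvw` of `H` with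
minimum `H`-degree 4: (1) if `d_H(v) = 4` and `d(v) > 4` then `d_H(u) ≥ 6` and
`d_H(w) ≥ 6`; (2) if `d_H(v) = 4` and `4 ≤ d_H(u) ≤ 5` then `d(v) = 4`;
(3) some vertex of the triangle has `H`-degree at least 5. -/
theorem stmt_8 (G : SimpleGraph V) [DecidableRel G.Adj]
    (h2c : TwoConnected G)
    (hi : ∀ v w : V, G.Adj v w → G.degree v = 2 → ¬ G.degree w ≤ 5)
    (hii : ∀ z : V, 6 ≤ G.degree z → (∃ t, G.Adj z t ∧ G.degree t = 2) →
      nk G z 2 + nk G z 3 ≤ G.degree z - 3)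
    (hiii : ∀ z : V, 6 ≤ G.degree z → (∃ t, G.Adj z t ∧ G.degree t = 2) →
      ¬ (nk G z 2 + nk G z 3 = G.degree z - 3 ∧ nk G z 3 ≤ 3))
    (hiv : ¬ ∃ z a b : V, 6 ≤ G.degree z ∧ (∃ t, G.Adj z t ∧ G.degree t = 2) ∧
      nk G z 2 = G.degree z - 4 ∧
      G.Adj z a ∧ G.Adj z b ∧ 3 ≤ G.degree a ∧ 3 ≤ G.degree b ∧ G.Adj a b ∧
      (nk G b 2 = G.degree b - 4 ∨ nk G b 2 = G.degree b - 5))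
    (hv : ∀ a b c : V, G.Adj a b → G.Adj b c → G.Adj c a →
      ¬ (G.degree a = 4 ∧ G.degree b = 4 ∧ G.degree c = 4)) :
    ∀ u v w : V, (delTwo G).Adj u v → (delTwo G).Adj v w → (delTwo G).Adj w u →
      min (min ((delTwo G).degree u) ((delTwo G).degree v)) ((delTwo G).degree w) = 4 →
      (((delTwo G).degree v = 4 ∧ 4 < G.degree v →
          6 ≤ (delTwo G).degree u ∧ 6 ≤ (delTwo G).degree w) ∧
       ((delTwo G).degree v = 4 ∧ 4 ≤ (delTwo G).degree u ∧ (delTwo G).degree u ≤ 5 →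
          G.degree v = 4) ∧
       (5 ≤ (delTwo G).degree u ∨ 5 ≤ (delTwo G).degree v ∨ 5 ≤ (delTwo G).degree w)) := by
  intro u v w huv hvw hwu hmin4
  have hmd : ∀ t, 2 ≤ G.degree t := two_le_degree_of_twoConnected' G h2c
  refine ⟨?_, ?_, ?_⟩
  · rintro ⟨hv4, hv5⟩
    constructor
    · by_contra h
      have := key_deg_four G hmd hi hiv huv.symm hvw hwu hv4 (by omega)
      omega
    · by_contra h
      have := key_deg_four G hmd hi hiv hvw huv.symm hwu.symm hv4 (by omega)
      omega
  · rintro ⟨hv4, hu4, hu5⟩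
    exact key_deg_four G hmd hi hiv huv.symm hvw hwu hv4 (by omega)
  · by_contra h
    push_neg at h
    obtain ⟨h1, h2, h3⟩ := h
    have dv4 := key_deg_four G hmd hi hiv huv.symm hvw hwu (by omega) (by omega)
    have du4 := key_deg_four G hmd hi hiv huv hwu.symm hvw.symm (by omega) (by omega)
    have dw4 := key_deg_four G hmd hi hiv hwu hvw.symm huv.symm (by omega) (by omega)
    exact hv u v w huv.1 hvw.1 hwu.1 ⟨du4, dv4, dw4⟩
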